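/- For every integer m ≥ 1, every integer r ≥ 2, every vector a = (a_1,…,a_r) of nonzero real numbers with a_1 + a_2 ≠ 0, and every x = (x_1,…,x_r) ∈ ℝ^r, one has ζ_fml(1−m, a, x) = ζ_fml(1−m, (a_1, a_1+a_2, a_3,…,a_r), (x_1−x_2, x_2, x_3,…,x_r)) + ζ_fml(1−m, (a_1+a_2, a_2, a_3,…,a_r), (x_1, x_2−x_1+1, x_3,…,x_r)). -/

import Mathlib

open scoped BigOperators

/-- The formal multiple zeta value `zetaFml m a x = ζ_fml(1 - m, a, x)` of the paper:
`(-1)^r (m-1)! ∑_{l, Σ l i = m + r - 1} ∏_i B_{l i}(x i) * (a i)^(l i - 1) / (l i)!`,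
where `B_l` is the `l`-th Bernoulli polynomial (normalized with `B₁(X) = X - 1/2`)
and `(a i)^(l i - 1)` is an integer (`zpow`) power. -/
noncomputable def zetaFml (m : ℕ) {r : ℕ} (a x : Fin r → ℝ) : ℝ :=
  (-1 : ℝ) ^ r * (Nat.factorial (m - 1)) *
    ∑ l ∈ Finset.Nat.antidiagonalTuple r (m + r - 1),
      ∏ i, Polynomial.aeval (x i) (Polynomial.bernoulli (l i)) * a i ^ ((l i : ℤ) - 1)
        / (Nat.factorial (l i))

open PowerSeries Polynomial

/-- Auxiliary generating series: `∑_n B_n(x) a^n / n! X^n`. -/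
noncomputable def Bser (a x : ℝ) : PowerSeries ℝ :=
  rescale a (mk fun n => aeval x ((1 / (n.factorial : ℚ)) • Polynomial.bernoulli n))

lemma coeff_Bser (a x : ℝ) (n : ℕ) :
    PowerSeries.coeff (R := ℝ) n (Bser a x) = aeval x (Polynomial.bernoulli n) * a ^ n / n.factorial := by
  have hn : (n.factorial : ℝ) ≠ 0 := Nat.cast_ne_zero.mpr n.factorial_ne_zero
  simp only [Bser, coeff_rescale, coeff_mk, map_smul, Rat.smul_def]
  push_cast
  field_simp

lemma Bser_mul_exp (a x : ℝ) :
    Bser a x * (rescale a (exp ℝ) - 1)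
      = PowerSeries.C (R := ℝ) a * PowerSeries.X * rescale (x * a) (exp ℝ) := by
  have h := congrArg (rescale a) (bernoulli_generating_function (A := ℝ) x)
  rw [map_mul, map_sub, map_one, map_mul, rescale_rescale, rescale_X] at h
  rw [Bser]
  exact h

lemma rescale_exp_sub_one_ne_zero {c : ℝ} (hc : c ≠ 0) : rescale c (exp ℝ) - 1 ≠ 0 := by
  intro h
  have h1 : PowerSeries.coeff (R := ℝ) 1 (rescale c (exp ℝ) - 1) = c := by
    simp [coeff_rescale, coeff_exp, PowerSeries.coeff_one]
  rw [h] at h1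
  simp at h1
  exact hc h1.symm

lemma Bser_key (A B x0 x1 : ℝ) (hA : A ≠ 0) (hB : B ≠ 0) (hS : A + B ≠ 0) :
    PowerSeries.C (R := ℝ) (A + B) * (Bser A x0 * Bser B x1)
      = PowerSeries.C (R := ℝ) B * (Bser A (x0 - x1) * Bser (A + B) x1)
        + PowerSeries.C (R := ℝ) A * (Bser (A + B) x0 * Bser B (x1 - x0 + 1)) := by
  have hD : (rescale A (exp ℝ) - 1) *
      ((rescale B (exp ℝ) - 1) * (rescale (A + B) (exp ℝ) - 1)) ≠ 0 :=
    mul_ne_zero (rescale_exp_sub_one_ne_zero hA)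
      (mul_ne_zero (rescale_exp_sub_one_ne_zero hB) (rescale_exp_sub_one_ne_zero hS))
  apply mul_right_cancel₀ hD
  have h1 := Bser_mul_exp A x0
  have h2 := Bser_mul_exp B x1
  have h3 := Bser_mul_exp A (x0 - x1)
  have h4 := Bser_mul_exp (A + B) x1
  have h5 := Bser_mul_exp (A + B) x0
  have h6 := Bser_mul_exp B (x1 - x0 + 1)
  have e12 : rescale (x0 * A) (exp ℝ) * rescale (x1 * B) (exp ℝ)
      = rescale (x0 * A + x1 * B) (exp ℝ) := exp_mul_exp_eq_exp_add _ _
  have e34 : rescale ((x0 - x1) * A) (exp ℝ) * rescale (x1 * (A + B)) (exp ℝ)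
      = rescale (x0 * A + x1 * B) (exp ℝ) := by
    rw [exp_mul_exp_eq_exp_add]
    have : (x0 - x1) * A + x1 * (A + B) = x0 * A + x1 * B := by ring
    rw [this]
  have e56 : rescale (x0 * (A + B)) (exp ℝ) * rescale ((x1 - x0 + 1) * B) (exp ℝ)
      = rescale (x0 * A + x1 * B) (exp ℝ) * rescale B (exp ℝ) := by
    rw [exp_mul_exp_eq_exp_add, exp_mul_exp_eq_exp_add]
    have : x0 * (A + B) + (x1 - x0 + 1) * B = x0 * A + x1 * B + B := by ring
    rw [this]
  have eAB : rescale A (exp ℝ) * rescale B (exp ℝ) = rescale (A + B) (exp ℝ) :=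
    exp_mul_exp_eq_exp_add _ _
  set eA := rescale A (exp ℝ)
  set eB := rescale B (exp ℝ)
  set eS := rescale (A + B) (exp ℝ)
  set E1 := rescale (x0 * A) (exp ℝ)
  set E2 := rescale (x1 * B) (exp ℝ)
  set E3' := rescale ((x0 - x1) * A) (exp ℝ)
  set E3 := rescale (x1 * (A + B)) (exp ℝ)
  set E4 := rescale (x0 * (A + B)) (exp ℝ)
  set E5 := rescale ((x1 - x0 + 1) * B) (exp ℝ)
  set U := rescale (x0 * A + x1 * B) (exp ℝ)
  set CA := PowerSeries.C (R := ℝ) A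
  set CB := PowerSeries.C (R := ℝ) B
  set CS := PowerSeries.C (R := ℝ) (A + B)
  set XX := (PowerSeries.X : PowerSeries ℝ)
  linear_combination
    (CS * Bser B x1 * ((eB - 1) * (eS - 1))) * h1
    + (CS * CA * XX * E1 * (eS - 1)) * h2
    + (CS * CA * CB * XX ^ 2 * (eS - 1)) * e12
    - (CB * Bser (A + B) x1 * ((eB - 1) * (eS - 1))) * h3
    - (CB * CA * XX * E3' * (eB - 1)) * h4
    - (CA * CB * CS * XX ^ 2 * (eB - 1)) * e34
    - (CA * Bser B (x1 - x0 + 1) * ((eA - 1) * (eB - 1))) * h5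
    - (CA * CS * XX * E4 * (eA - 1)) * h6
    - (CA * CB * CS * XX ^ 2 * (eA - 1)) * e56
    - (CA * CB * CS * XX ^ 2 * U) * eAB

lemma coeff_prod_Bser {r : ℕ} (n : ℕ) (a x : Fin r → ℝ) :
    PowerSeries.coeff (R := ℝ) n (∏ i, Bser (a i) (x i)) =
      ∑ l ∈ Finset.Nat.antidiagonalTuple r n,
        ∏ i, aeval (x i) (Polynomial.bernoulli (l i)) * a i ^ (l i) / Nat.factorial (l i) := by
  rw [coeff_prod]
  refine Finset.sum_bij' (fun f _ => ⇑f) (fun l _ => Finsupp.equivFunOnFinite.symm l)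
    ?_ ?_ ?_ ?_ ?_
  · intro f hf
    rw [Finset.mem_finsuppAntidiag] at hf
    rw [Finset.Nat.mem_antidiagonalTuple]
    exact hf.1
  · intro l hl
    rw [Finset.Nat.mem_antidiagonalTuple] at hl
    rw [Finset.mem_finsuppAntidiag]
    refine ⟨?_, Finset.subset_univ _⟩
    simpa using hl
  · intro f hf
    exact Finsupp.equivFunOnFinite.symm_apply_apply f
  · intro l hl
    rfl
  · intro f hf
    exact Finset.prod_congr rfl fun i _ => coeff_Bser (a i) (x i) (f i)

lemma zetaFml_eq (m : ℕ) {r : ℕ} (a x : Fin r → ℝ) (ha : ∀ i, a i ≠ 0) :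
    zetaFml m a x = (-1 : ℝ) ^ r * (Nat.factorial (m - 1)) * (∏ i, (a i)⁻¹) *
      PowerSeries.coeff (R := ℝ) (m + r - 1) (∏ i, Bser (a i) (x i)) := by
  rw [coeff_prod_Bser, zetaFml, Finset.mul_sum, Finset.mul_sum]
  refine Finset.sum_congr rfl fun l _ => ?_
  have key : ∀ i, aeval (x i) (Polynomial.bernoulli (l i)) * a i ^ ((l i : ℤ) - 1) / Nat.factorial (l i)
      = (a i)⁻¹ * (aeval (x i) (Polynomial.bernoulli (l i)) * a i ^ (l i) / Nat.factorial (l i)) := by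
    intro i
    rw [zpow_sub_one₀ (ha i), zpow_natCast]
    ring
  rw [Finset.prod_congr rfl fun i _ => key i, Finset.prod_mul_distrib]
  ring

lemma prod_fin_two_add {M : Type*} [CommMonoid M] {r : ℕ} (f : Fin (r + 2) → M) :
    ∏ i, f i = f 0 * (f 1 * ∏ i : Fin r, f i.succ.succ) := by
  rw [Fin.prod_univ_succ, Fin.prod_univ_succ, Fin.succ_zero_eq_one]

theorem zetaFml_cone_subdivision_two (m : ℕ) (hm : 1 ≤ m) (r : ℕ) (a x : Fin (r + 2) → ℝ)
    (ha : ∀ i, a i ≠ 0) (h12 : a 0 + a 1 ≠ 0) :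
    zetaFml m a x
      = zetaFml m (Function.update a 1 (a 0 + a 1)) (Function.update x 0 (x 0 - x 1))
        + zetaFml m (Function.update a 0 (a 0 + a 1)) (Function.update x 1 (x 1 - x 0 + 1)) := by
  have h01 : (0 : Fin (r + 2)) ≠ 1 := by
    simp [Fin.ext_iff]
  have ha' : ∀ i, Function.update a 1 (a 0 + a 1) i ≠ 0 := by
    intro i
    rcases eq_or_ne i 1 with rfl | h
    · simpa using h12
    · rw [Function.update_of_ne h]; exact ha i
  have ha'' : ∀ i, Function.update a 0 (a 0 + a 1) i ≠ 0 := by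
    intro i
    rcases eq_or_ne i 0 with rfl | h
    · simpa using h12
    · rw [Function.update_of_ne h]; exact ha i
  rw [zetaFml_eq m a x ha, zetaFml_eq m _ _ ha', zetaFml_eq m _ _ ha'']
  set n := m + (r + 2) - 1 with hn
  -- split the products over `Fin (r + 2)`
  rw [prod_fin_two_add (fun i => Bser (a i) (x i)),
    prod_fin_two_add (fun i => (a i)⁻¹),
    prod_fin_two_add (fun i => Bser (Function.update a 1 (a 0 + a 1) i)
      (Function.update x 0 (x 0 - x 1) i)),
    prod_fin_two_add (fun i => (Function.update a 1 (a 0 + a 1) i)⁻¹),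
    prod_fin_two_add (fun i => Bser (Function.update a 0 (a 0 + a 1) i)
      (Function.update x 1 (x 1 - x 0 + 1) i)),
    prod_fin_two_add (fun i => (Function.update a 0 (a 0 + a 1) i)⁻¹)]
  simp only [Function.update_self, Function.update_of_ne h01, Function.update_of_ne h01.symm,
    Function.update_of_ne (Fin.succ_succ_ne_one _), Function.update_of_ne (Fin.succ_ne_zero _)]
  set P := ∏ i : Fin r, Bser (a i.succ.succ) (x i.succ.succ) with hP
  set Q := ∏ i : Fin r, (a i.succ.succ)⁻¹ with hQ
  have hk := congrArg (fun F => PowerSeries.coeff (R := ℝ) n (F * P)) (Bser_key (a 0) (a 1) (x 0) (x 1) (ha 0) (ha 1) h12)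
  simp only [add_mul, map_add, mul_assoc, PowerSeries.coeff_C_mul] at hk
  set L := PowerSeries.coeff (R := ℝ) n (Bser (a 0) (x 0) * (Bser (a 1) (x 1) * P)) with hL
  set M := PowerSeries.coeff (R := ℝ) n (Bser (a 0) (x 0 - x 1) * (Bser (a 0 + a 1) (x 1) * P)) with hM
  set N := PowerSeries.coeff (R := ℝ) n (Bser (a 0 + a 1) (x 0) * (Bser (a 1) (x 1 - x 0 + 1) * P)) with hN
  have h2 : (a 0)⁻¹ * ((a 1)⁻¹ * Q) * L
      = (a 0)⁻¹ * ((a 0 + a 1)⁻¹ * Q) * M + (a 0 + a 1)⁻¹ * ((a 1)⁻¹ * Q) * N := by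
    have h0 : a 0 ≠ 0 := ha 0
    have h1 : a 1 ≠ 0 := ha 1
    field_simp
    linear_combination (Q) * hk
  linear_combination ((-1 : ℝ) ^ (r + 2) * (Nat.factorial (m - 1))) * h2
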